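/- Let E and K be finite types, N ∈ ℕ a horizon, h > 0 a step size, v i k > 0 free-flow speeds, L i > 0 cell lengths, and suppose the CFL condition h ≤ L i / v i k holds for all i ∈ E, k ∈ K. Let x : Fin (N+1) → E → K → ℝ, z : Fin N → E → K → ℝ, and g : Fin N → E → K → ℝ satisfy, for all t, i, k: x (t+1) i k = x t i k + h · (g t i k − z t i k), where g t i k ≥ 0 (total inflow including the exogenous inflow) and 0 ≤ z t i k ≤ (v i k / L i) · x t i k. If x 0 i k ≥ 0 for all i, k, then x t i k ≥ 0 for all t ∈ Fin (N+1), i ∈ E, k ∈ K. -/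
import Mathlib


/-- Forward invariance of the nonnegative orthant for the discrete-time
multi-commodity CTM with linear demands `d i k (x) = (v i k / L i) * x` under
the CFL condition `h ≤ L i / v i k`: if the state starts nonnegative, it stays
nonnegative. -/
theorem discrete_nonneg_invariance
    (E K : Type*) [Fintype E] [Fintype K] (N : ℕ)
    (h : ℝ) (hh : 0 < h)
    (v : E → K → ℝ) (hv : ∀ i k, 0 < v i k)
    (L : E → ℝ) (hL : ∀ i, 0 < L i)
    (hCFL : ∀ i k, h ≤ L i / v i k)
    (x : Fin (N + 1) → E → K → ℝ) (z g : Fin N → E → K → ℝ)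
    (hupd : ∀ (t : Fin N) i k,
      x t.succ i k = x t.castSucc i k + h * (g t i k - z t i k))
    (hg : ∀ t i k, 0 ≤ g t i k)
    (hz : ∀ (t : Fin N) i k,
      0 ≤ z t i k ∧ z t i k ≤ (v i k / L i) * x t.castSucc i k)
    (hx0 : ∀ i k, 0 ≤ x 0 i k) :
    ∀ t i k, 0 ≤ x t i k := by
  intro t
  induction t using Fin.induction with
  | zero => exact hx0
  | succ t ih =>
    intro i k
    rw [hupd t i k]
    obtain ⟨hz0, hzle⟩ := hz t i k
    have hx : 0 ≤ x t.castSucc i k := ih i k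
    have hvL : 0 < v i k / L i := div_pos (hv i k) (hL i)
    have key : h * z t i k ≤ x t.castSucc i k := by
      calc h * z t i k ≤ h * ((v i k / L i) * x t.castSucc i k) := by
            exact mul_le_mul_of_nonneg_left hzle hh.le
        _ ≤ (L i / v i k) * ((v i k / L i) * x t.castSucc i k) := by
            exact mul_le_mul_of_nonneg_right (hCFL i k) (by positivity)
        _ = x t.castSucc i k := by
            rw [← mul_assoc, div_mul_div_comm, mul_comm (L i) (v i k),
              div_self (by have := hv i k; have := hL i; positivity), one_mul]
    nlinarith [hg t i k, hh.le]
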